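/- For q ~ t_d(μ, Σ, ν) with ν > 2 and γ = −2/(ν+d), the γ-power entropy satisfies H_γ(q) = −C_{ν,d}^{γ/(1+γ)} |Σ|^{−γ/(2(1+γ))} (1 + d/(ν−2))^{1/(1+γ)}; equivalently ∫ q(x)^{1+γ} dx = C_{ν,d}^γ |Σ|^{−γ/2}(1 + d/(ν−2)). -/

import Mathlib

open MeasureTheory Matrix

section aux

open Real Set Module

private lemma betaR' {a b : ℝ} (ha : 0 < a) (hb : 0 < b) :
    ∫ x in (0:ℝ)..1, x ^ (a-1) * (1-x) ^ (b-1)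
      = Real.Gamma a * Real.Gamma b / Real.Gamma (a+b) := by
  have key : Complex.Gamma a * Complex.Gamma b
      = Complex.Gamma (a + b) * Complex.betaIntegral a b :=
    Complex.Gamma_mul_Gamma_eq_betaIntegral (by simpa using ha) (by simpa using hb)
  have hbeta : Complex.betaIntegral a b
      = ((∫ x in (0:ℝ)..1, x ^ (a-1) * (1-x) ^ (b-1) : ℝ) : ℂ) := by
    rw [Complex.betaIntegral, ← intervalIntegral.integral_ofReal]
    refine intervalIntegral.integral_congr fun x hx => ?_
    rw [uIcc_of_le zero_le_one] at hx
    rw [Complex.ofReal_mul, Complex.ofReal_cpow hx.1, Complex.ofReal_cpow (by linarith [hx.2])]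
    push_cast
    ring
  have hG : Real.Gamma (a + b) ≠ 0 := (Real.Gamma_pos_of_pos (by linarith)).ne'
  rw [hbeta, ← Complex.ofReal_add, Complex.Gamma_ofReal, Complex.Gamma_ofReal,
    Complex.Gamma_ofReal, ← Complex.ofReal_mul, ← Complex.ofReal_mul] at key
  have := Complex.ofReal_injective key
  field_simp
  linarith [this]

private lemma beta_Ioo' {a b : ℝ} (ha : 0 < a) (hb : 0 < b) :
    ∫ x in Ioo (0:ℝ) 1, x ^ (a-1) * (1-x) ^ (b-1)
      = Real.Gamma a * Real.Gamma b / Real.Gamma (a+b) := by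
  rw [← integral_Ioc_eq_integral_Ioo, ← intervalIntegral.integral_of_le zero_le_one,
    betaR' ha hb]

private lemma radial' (d : ℕ) (hd : 1 ≤ d) {p : ℝ} (hp : (d:ℝ)/2 < p) :
    ∫ y in Ioi (0:ℝ), y ^ (d-1) * (1+y^2) ^ (-p)
      = Real.Gamma ((d:ℝ)/2) * Real.Gamma (p - (d:ℝ)/2) / (2 * Real.Gamma p) := by
  have hd2 : (0:ℝ) < (d:ℝ)/2 := by positivity
  set f : ℝ → ℝ := fun y => y^2/(1+y^2) with hf
  set f' : ℝ → ℝ := fun y => 2*y/(1+y^2)^2 with hf'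
  have hderiv : ∀ y ∈ Ioi (0:ℝ), HasDerivWithinAt f (f' y) (Ioi 0) y := by
    intro y hy
    have hA : (1:ℝ)+y^2 ≠ 0 := by positivity
    have := ((hasDerivAt_pow 2 y).div ((hasDerivAt_pow 2 y).const_add 1) hA)
    exact this.hasDerivWithinAt.congr_deriv (by simp only [f']; field_simp; ring)
  have hinj : InjOn f (Ioi 0) := by
    intro y hy z hz h
    simp only [f] at h
    have hy' : (0:ℝ) < y := hy
    have hz' : (0:ℝ) < z := hz
    have h2 : y^2 * (1+z^2) = z^2 * (1+y^2) := by
      field_simp at h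
      linarith [h]
    have : y^2 = z^2 := by nlinarith
    nlinarith
  have himg : f '' (Ioi 0) = Ioo 0 1 := by
    ext u
    constructor
    · rintro ⟨y, hy, rfl⟩
      have hy' : (0:ℝ) < y := hy
      constructor
      · positivity
      · rw [div_lt_one (by positivity)]; linarith
    · rintro ⟨hu0, hu1⟩
      have h1u : (0:ℝ) < 1 - u := by linarith
      refine ⟨Real.sqrt (u/(1-u)), ?_, ?_⟩
      · exact Real.sqrt_pos.mpr (by positivity)
      · have : Real.sqrt (u/(1-u)) ^ 2 = u/(1-u) :=
          Real.sq_sqrt (by positivity)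
        simp only [f, this]
        field_simp
        ring
  have key := MeasureTheory.integral_image_eq_integral_abs_deriv_smul measurableSet_Ioi
      hderiv hinj (fun u => u ^ ((d:ℝ)/2-1) * (1-u) ^ (p-(d:ℝ)/2-1))
  rw [himg, beta_Ioo' hd2 (by linarith),
    show (d:ℝ)/2 + (p-(d:ℝ)/2) = p by ring] at key
  have hcongr : ∀ y ∈ Ioi (0:ℝ),
      |f' y| • (f y ^ ((d:ℝ)/2-1) * (1 - f y) ^ (p-(d:ℝ)/2-1))
        = 2 * (y ^ (d-1) * (1+y^2) ^ (-p)) := by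
    intro y hy
    have hy' : (0:ℝ) < y := hy
    simp only [f, f']
    have hA : (0:ℝ) < 1+y^2 := by positivity
    have h1 : 1 - y^2/(1+y^2) = (1+y^2)⁻¹ := by field_simp; ring
    have h2 : y^2/(1+y^2) = y^2 * (1+y^2)⁻¹ := by field_simp
    rw [h1, h2, abs_of_pos (by positivity), smul_eq_mul]
    set A := 1+y^2 with hAdef
    have hAne : A ≠ 0 := hA.ne'
    rw [Real.mul_rpow (sq_nonneg y) (by positivity),
      Real.inv_rpow hA.le, Real.inv_rpow hA.le,
      ← Real.rpow_neg hA.le, ← Real.rpow_neg hA.le,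
      ← Real.rpow_natCast y 2, ← Real.rpow_mul hy'.le,
      ← Real.rpow_natCast y (d-1),
      show ((d-1 : ℕ) : ℝ) = (d:ℝ) - 1 by push_cast [hd]; ring,
      div_eq_mul_inv, ← Real.rpow_natCast A 2, ← Real.rpow_neg hA.le,
      show (2:ℝ)*y*A^(-((2:ℕ):ℝ)) * (y ^ (((2:ℕ):ℝ)*((d:ℝ)/2-1)) * A^(-((d:ℝ)/2-1)) * A^(-(p-(d:ℝ)/2-1)))
        = 2 * ((y^(1:ℝ) * y ^ (((2:ℕ):ℝ)*((d:ℝ)/2-1))) * (A^(-((2:ℕ):ℝ)) * A^(-((d:ℝ)/2-1)) * A^(-(p-(d:ℝ)/2-1))))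
        by rw [Real.rpow_one]; ring,
      ← Real.rpow_add hy', ← Real.rpow_add hA, ← Real.rpow_add hA]
    norm_num
    rw [show (1:ℝ)+2*((d:ℝ)/2-1) = (d:ℝ)-1 by ring,
      show (-2+(1-(d:ℝ)/2)+(1-(p-(d:ℝ)/2)) : ℝ) = -p by ring]
  rw [setIntegral_congr_fun measurableSet_Ioi hcongr, MeasureTheory.integral_const_mul] at key
  have hp0 : (0:ℝ) < p := lt_of_le_of_lt (by positivity) hp
  have hGp : Real.Gamma p ≠ 0 := (Real.Gamma_pos_of_pos hp0).ne'
  field_simp at key ⊢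
  linarith

private lemma eucl' (d : ℕ) (hd : 1 ≤ d) {p : ℝ} (hp : (d:ℝ)/2 < p) :
    ∫ x : EuclideanSpace ℝ (Fin d), (1 + ‖x‖^2) ^ (-p)
      = Real.pi ^ ((d:ℝ)/2) * Real.Gamma (p - (d:ℝ)/2) / Real.Gamma p := by
  haveI : Nonempty (Fin d) := ⟨⟨0, hd⟩⟩
  haveI : Nontrivial (EuclideanSpace ℝ (Fin d)) := by
    infer_instance
  have hpolar := MeasureTheory.integral_fun_norm_addHaar
    (volume : Measure (EuclideanSpace ℝ (Fin d))) (fun r => (1+r^2) ^ (-p))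
  have hdim : finrank ℝ (EuclideanSpace ℝ (Fin d)) = d := finrank_euclideanSpace_fin
  have hball : (volume : Measure (EuclideanSpace ℝ (Fin d))).real (Metric.ball (0 : EuclideanSpace ℝ (Fin d)) 1)
      = Real.sqrt π ^ d / Real.Gamma ((d:ℝ)/2 + 1) := by
    rw [measureReal_def, EuclideanSpace.volume_ball (Fin d) (0 : EuclideanSpace ℝ (Fin d)) 1]
    simp only [Fintype.card_fin, ENNReal.ofReal_one, one_pow, one_mul]
    rw [ENNReal.toReal_ofReal (by positivity)]
  rw [hdim, hball] at hpolar
  rw [hpolar]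
  have hrad := radial' d hd hp
  simp only [smul_eq_mul] at *
  rw [hrad]
  have h1 : Real.Gamma ((d:ℝ)/2 + 1) = ((d:ℝ)/2) * Real.Gamma ((d:ℝ)/2) :=
    Real.Gamma_add_one (by positivity)
  have h2 : Real.sqrt π ^ d = π ^ ((d:ℝ)/2) := by
    rw [← Real.rpow_natCast (Real.sqrt π) d, Real.sqrt_eq_rpow,
      ← Real.rpow_mul pi_pos.le]
    norm_num
    ring_nf
  have hGd : Real.Gamma ((d:ℝ)/2) ≠ 0 := (Real.Gamma_pos_of_pos (by positivity)).ne'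
  have hp0 : (0:ℝ) < p := lt_of_le_of_lt (by positivity) hp
  have hGp : Real.Gamma p ≠ 0 := (Real.Gamma_pos_of_pos hp0).ne'
  rw [h1, h2, nsmul_eq_mul]
  field_simp

private lemma pi_int' (d : ℕ) (hd : 1 ≤ d) {p : ℝ} (hp : (d:ℝ)/2 < p) :
    ∫ x : Fin d → ℝ, (1 + x ⬝ᵥ x) ^ (-p)
      = Real.pi ^ ((d:ℝ)/2) * Real.Gamma (p - (d:ℝ)/2) / Real.Gamma p := by
  rw [← eucl' d hd hp]
  rw [← (EuclideanSpace.volume_preserving_symm_measurableEquiv_toLp (Fin d)).integral_comp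
    (MeasurableEquiv.toLp 2 (Fin d → ℝ)).symm.measurableEmbedding
    (fun x : Fin d → ℝ => (1 + x ⬝ᵥ x) ^ (-p))]
  congr 1
  ext z
  congr 2
  rw [EuclideanSpace.norm_eq, Real.sq_sqrt (by positivity)]
  simp [dotProduct, Real.norm_eq_abs, sq_abs, sq]

open scoped MatrixOrder in
private lemma key' (d : ℕ) (hd : 1 ≤ d) {ν p : ℝ} (hν : 0 < ν) (hp : (d:ℝ)/2 < p)
    (μ : Fin d → ℝ) (S : Matrix (Fin d) (Fin d) ℝ) (hS : S.PosDef) :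
    ∫ x : Fin d → ℝ, (1 + (1/ν) * ((x - μ) ⬝ᵥ (S⁻¹ *ᵥ (x - μ)))) ^ (-p)
      = Real.sqrt S.det * ν ^ ((d:ℝ)/2) * Real.pi ^ ((d:ℝ)/2)
        * Real.Gamma (p - (d:ℝ)/2) / Real.Gamma p := by
  set g : (Fin d → ℝ) → ℝ := fun v => (1 + (1/ν) * (v ⬝ᵥ (S⁻¹ *ᵥ v))) ^ (-p) with hg
  have hstep1 : ∫ x : Fin d → ℝ, (1 + (1/ν) * ((x - μ) ⬝ᵥ (S⁻¹ *ᵥ (x - μ)))) ^ (-p)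
      = ∫ x, g x := integral_sub_right_eq_self g μ
  set Q : Matrix (Fin d) (Fin d) ℝ := CFC.sqrt S with hQ
  have hQQ : Q * Q = S := CFC.sqrt_mul_sqrt_self S hS.posSemidef.nonneg
  have hQT : Qᵀ = Q := by
    have h := (CFC.sqrt_nonneg S).posSemidef.1
    simpa [Matrix.IsHermitian] using h
  have hdetS : 0 < S.det := hS.det_pos
  have hdetQ2 : Q.det * Q.det = S.det := by rw [← det_mul, hQQ]
  have hdetQ : Q.det ≠ 0 := by
    intro h; rw [h, mul_zero] at hdetQ2; exact hdetS.ne hdetQ2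
  have hQunit : IsUnit Q.det := isUnit_iff_ne_zero.mpr hdetQ
  set B : Matrix (Fin d) (Fin d) ℝ := Real.sqrt ν • Q with hB
  have hdetB : B.det = Real.sqrt ν ^ d * Q.det := by
    rw [hB, det_smul, Fintype.card_fin]
  have hsν : (0:ℝ) < Real.sqrt ν := Real.sqrt_pos.mpr hν
  have hdetBne : B.det ≠ 0 := by
    rw [hdetB]; positivity
  have habsB : |B.det| = ν ^ ((d:ℝ)/2) * Real.sqrt S.det := by
    rw [hdetB, abs_mul, abs_of_pos (by positivity), ← Real.sqrt_mul_self_eq_abs, hdetQ2]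
    congr 1
    rw [← Real.rpow_natCast (Real.sqrt ν) d, Real.sqrt_eq_rpow, ← Real.rpow_mul hν.le]
    ring_nf
  have hgc : Continuous g := by
    apply Continuous.rpow_const
    · have : Continuous fun v : Fin d → ℝ => v ⬝ᵥ (S⁻¹ *ᵥ v) := by
        simp only [dotProduct, Matrix.mulVec]
        continuity
      fun_prop
    · intro x
      left
      have hq : 0 ≤ x ⬝ᵥ (S⁻¹ *ᵥ x) := by
        rcases eq_or_ne x 0 with rfl | hx
        · simp
        · exact le_of_lt (by simpa using hS.inv.dotProduct_mulVec_pos hx)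
      positivity
  have hdetL : LinearMap.det (Matrix.toLin' B) = B.det := LinearMap.det_toLin' B
  have hmap : Measure.map (Matrix.toLin' B) (volume : Measure (Fin d → ℝ))
      = ENNReal.ofReal |B.det|⁻¹ • volume := by
    rw [Real.map_linearMap_volume_pi_eq_smul_volume_pi (by rw [hdetL]; exact hdetBne), hdetL,
      abs_inv]
  have hstep2 : ∫ y : Fin d → ℝ, g (B *ᵥ y) = |B.det|⁻¹ * ∫ x, g x := by
    have h1 : ∫ x, g x ∂(Measure.map (Matrix.toLin' B) volume)
        = ∫ y : Fin d → ℝ, g (B *ᵥ y) := by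
      rw [integral_map (Matrix.toLin' B).continuous_of_finiteDimensional.aemeasurable
        hgc.aestronglyMeasurable]
      simp only [Matrix.toLin'_apply]
    rw [← h1, hmap, integral_smul_measure, ENNReal.toReal_ofReal (by positivity), smul_eq_mul]
  have hpt : ∀ y : Fin d → ℝ, g (B *ᵥ y) = (1 + y ⬝ᵥ y) ^ (-p) := by
    intro y
    have hquad : (B *ᵥ y) ⬝ᵥ (S⁻¹ *ᵥ (B *ᵥ y)) = ν * (y ⬝ᵥ y) := by
      rw [hB, smul_mulVec, smul_dotProduct, mulVec_smul, dotProduct_smul,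
        smul_eq_mul, smul_eq_mul, ← mul_assoc, Real.mul_self_sqrt hν.le]
      congr 1
      have hQy : Q *ᵥ y = y ᵥ* Q := by
        conv_lhs => rw [← hQT]
        rw [Matrix.mulVec_transpose]
      rw [mulVec_mulVec, hQy, dotProduct_mulVec, vecMul_vecMul]
      have hid : Q * (S⁻¹ * Q) = 1 := by
        rw [← hQQ, Matrix.mul_inv_rev, ← Matrix.mul_assoc, ← Matrix.mul_assoc,
          Matrix.mul_nonsing_inv Q hQunit, Matrix.one_mul,
          Matrix.nonsing_inv_mul Q hQunit]
      rw [hid, Matrix.vecMul_one]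
    rw [hg]
    simp only
    rw [hquad, ← mul_assoc]
    rw [one_div, inv_mul_cancel₀ hν.ne', one_mul]
  have hgB : ∫ y : Fin d → ℝ, g (B *ᵥ y) = ∫ y : Fin d → ℝ, (1 + y ⬝ᵥ y) ^ (-p) := by
    exact integral_congr_ae (Filter.Eventually.of_forall hpt)
  rw [hstep1, show (∫ x, g x) = |B.det| * ∫ y : Fin d → ℝ, (1 + y ⬝ᵥ y) ^ (-p) by
    rw [← hgB, hstep2, ← mul_assoc, mul_inv_cancel₀ (abs_ne_zero.mpr hdetBne), one_mul],
    pi_int' d hd hp, habsB]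
  ring

end aux

noncomputable def tC (ν : ℝ) (d : ℕ) : ℝ :=
  Real.Gamma ((ν + d) / 2) / (Real.Gamma (ν / 2) * (ν * Real.pi) ^ ((d : ℝ) / 2))

noncomputable def tdens (d : ℕ) (μ : Fin d → ℝ) (S : Matrix (Fin d) (Fin d) ℝ)
    (ν : ℝ) (x : Fin d → ℝ) : ℝ :=
  tC ν d * S.det ^ (-(1 : ℝ) / 2) *
    (1 + (1 / ν) * ((x - μ) ⬝ᵥ (S⁻¹ *ᵥ (x - μ)))) ^ (-(ν + d) / 2)

/-- The γ-power entropy of a multivariate t-distribution, ν > 2, γ = −2/(ν+d):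
`∫ q^{1+γ} = C_{ν,d}^γ |Σ|^{−γ/2} (1 + d/(ν−2))` and the induced formula for H_γ. -/
theorem stmt_6 (d : ℕ) (ν γ : ℝ) (hν : 2 < ν) (hγ : γ = -2 / (ν + d))
    (μ : Fin d → ℝ) (S : Matrix (Fin d) (Fin d) ℝ) (hS : S.PosDef) :
    (∫ x, tdens d μ S ν x ^ (1 + γ))
      = tC ν d ^ γ * S.det ^ (-γ / 2) * (1 + d / (ν - 2)) ∧
    -((∫ x, tdens d μ S ν x ^ (1 + γ)) ^ (1 / (1 + γ)))
      = -(tC ν d ^ (γ / (1 + γ)) * S.det ^ (-γ / (2 * (1 + γ))) *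
          (1 + d / (ν - 2)) ^ (1 / (1 + γ))) := by
  have hν0 : (0:ℝ) < ν := by linarith
  have hνd : (0:ℝ) < ν + d := by positivity
  have hγ1 : 1 + γ = (ν + d - 2)/(ν + d) := by
    rw [hγ]; field_simp; ring
  have hp2 : (0:ℝ) < ν + d - 2 := by
    have : (0:ℝ) ≤ (d:ℝ) := Nat.cast_nonneg d
    linarith
  have h1γ : (0:ℝ) < 1 + γ := by rw [hγ1]; exact div_pos hp2 hνd
  have main : (∫ x, tdens d μ S ν x ^ (1 + γ))
      = tC ν d ^ γ * S.det ^ (-γ / 2) * (1 + d / (ν - 2)) := by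
    have hc : 0 < tC ν d := by
      unfold tC
      have h1 : 0 < Real.Gamma ((ν + d)/2) := Real.Gamma_pos_of_pos (by positivity)
      have h2 : 0 < Real.Gamma (ν/2) := Real.Gamma_pos_of_pos (by positivity)
      have h3 : (0:ℝ) < (ν * Real.pi) ^ ((d:ℝ)/2) :=
        Real.rpow_pos_of_pos (mul_pos hν0 Real.pi_pos) _
      positivity
    have hdetS : 0 < S.det := hS.det_pos
    have hfrac0 : (0:ℝ) < ν - 2 := by linarith
    have hGsub : Real.Gamma ((ν-2)/2) ≠ 0 := (Real.Gamma_pos_of_pos (by linarith)).ne'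
    rcases Nat.eq_zero_or_pos d with hd0 | hd1
    · subst hd0
      have hall : ∀ x : Fin 0 → ℝ, tdens 0 μ S ν x ^ (1+γ) = 1 := by
        intro x
        unfold tdens
        have hdet : S.det = 1 := by simp
        have htC : tC ν 0 = 1 := by
          unfold tC
          simp [(Real.Gamma_pos_of_pos (by linarith : (0:ℝ) < ν/2)).ne']
        simp [hdet, htC, dotProduct]
      rw [integral_congr_ae (Filter.Eventually.of_forall hall)]
      have htC : tC ν 0 = 1 := by
        unfold tC
        simp [(Real.Gamma_pos_of_pos (by linarith : (0:ℝ) < ν/2)).ne']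
      have hdet : S.det = 1 := by simp
      rw [htC, hdet]
      simp [MeasureTheory.integral_const, MeasureTheory.volume_pi, Measure.pi_univ, measureReal_def]
    · -- d ≥ 1
      set p : ℝ := (ν + d - 2)/2 with hpdef
      have hp : (d:ℝ)/2 < p := by
        rw [hpdef]
        have : (2:ℝ) < ν := hν
        linarith
      have hp0 : (0:ℝ) < p := lt_of_le_of_lt (by positivity) hp
      have hbpos : ∀ x : Fin d → ℝ,
          0 < 1 + (1/ν) * ((x - μ) ⬝ᵥ (S⁻¹ *ᵥ (x - μ))) := by
        intro x
        have hq : 0 ≤ (x - μ) ⬝ᵥ (S⁻¹ *ᵥ (x - μ)) := by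
          rcases eq_or_ne (x - μ) 0 with h0 | h0
          · rw [h0]; simp
          · exact le_of_lt (by simpa using hS.inv.dotProduct_mulVec_pos h0)
        positivity
      have hpt : ∀ x : Fin d → ℝ, tdens d μ S ν x ^ (1+γ)
          = tC ν d ^ (1+γ) * S.det ^ (-(1:ℝ)/2*(1+γ))
            * (1 + (1/ν) * ((x - μ) ⬝ᵥ (S⁻¹ *ᵥ (x - μ)))) ^ (-p) := by
        intro x
        unfold tdens
        rw [Real.mul_rpow (by positivity) (Real.rpow_nonneg (hbpos x).le _),
          Real.mul_rpow hc.le (Real.rpow_nonneg hdetS.le _),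
          ← Real.rpow_mul hdetS.le, ← Real.rpow_mul (hbpos x).le,
          show -(ν+(d:ℝ))/2*(1+γ) = -p by
            rw [hγ1, hpdef]; field_simp]
      rw [integral_congr_ae (Filter.Eventually.of_forall hpt),
        MeasureTheory.integral_const_mul,
        key' d hd1 hν0 hp μ S hS]
      have hsub : p - (d:ℝ)/2 = (ν-2)/2 := by rw [hpdef]; ring
      rw [hsub]
      have hGν : Real.Gamma ((ν+d)/2) = ((ν+d-2)/2) * Real.Gamma ((ν+d-2)/2) := by
        have h := Real.Gamma_add_one (show ((ν+(d:ℝ)-2)/2) ≠ 0 from (div_pos hp2 two_pos).ne')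
        rw [show (ν+(d:ℝ)-2)/2 + 1 = (ν+d)/2 by ring] at h
        exact h
      have hGν2 : Real.Gamma (ν/2) = ((ν-2)/2) * Real.Gamma ((ν-2)/2) := by
        have h := Real.Gamma_add_one (show ((ν-2)/2) ≠ 0 from (div_pos hfrac0 two_pos).ne')
        rw [show (ν-2)/2 + 1 = ν/2 by ring] at h
        exact h
      have hGp : Real.Gamma p ≠ 0 := (Real.Gamma_pos_of_pos hp0).ne'
      have hνrp : (0:ℝ) < ν ^ ((d:ℝ)/2) := Real.rpow_pos_of_pos hν0 _
      have hπrp : (0:ℝ) < Real.pi ^ ((d:ℝ)/2) := Real.rpow_pos_of_pos Real.pi_pos _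
      have e1 : tC ν d ^ (1+γ) = tC ν d ^ γ * tC ν d := by
        rw [show (1:ℝ)+γ = γ+1 by ring, Real.rpow_add hc, Real.rpow_one]
      have e2 : S.det ^ (-(1:ℝ)/2*(1+γ)) * Real.sqrt S.det = S.det ^ (-γ/2) := by
        rw [Real.sqrt_eq_rpow, ← Real.rpow_add hdetS,
          show -(1:ℝ)/2*(1+γ) + 1/2 = -γ/2 by ring]
      have e3 : tC ν d * (ν ^ ((d:ℝ)/2) * Real.pi ^ ((d:ℝ)/2))
          * (Real.Gamma ((ν-2)/2) / Real.Gamma p) = 1 + (d:ℝ)/(ν-2) := by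
        unfold tC
        rw [Real.mul_rpow hν0.le Real.pi_pos.le, hGν, hGν2, hpdef]
        have hGq : Real.Gamma ((ν+(d:ℝ)-2)/2) ≠ 0 :=
          (Real.Gamma_pos_of_pos (by linarith)).ne'
        field_simp
        ring
      calc tC ν d ^ (1+γ) * S.det ^ (-(1:ℝ)/2*(1+γ))
            * (Real.sqrt S.det * ν ^ ((d:ℝ)/2) * Real.pi ^ ((d:ℝ)/2)
              * Real.Gamma ((ν-2)/2) / Real.Gamma p)
          = (tC ν d ^ γ * S.det ^ (-γ/2))
            * (tC ν d * (ν ^ ((d:ℝ)/2) * Real.pi ^ ((d:ℝ)/2))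
              * (Real.Gamma ((ν-2)/2) / Real.Gamma p)) := by
            rw [e1, ← e2]; ring
        _ = tC ν d ^ γ * S.det ^ (-γ/2) * (1 + d/(ν-2)) := by rw [e3]
  refine ⟨main, ?_⟩
  rw [main]
  have hc : 0 < tC ν d := by
    unfold tC
    have h1 : 0 < Real.Gamma ((ν + d)/2) := Real.Gamma_pos_of_pos (by positivity)
    have h2 : 0 < Real.Gamma (ν/2) := Real.Gamma_pos_of_pos (by positivity)
    have h3 : (0:ℝ) < (ν * Real.pi) ^ ((d:ℝ)/2) :=
      Real.rpow_pos_of_pos (mul_pos hν0 Real.pi_pos) _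
    positivity
  have hdetS : 0 < S.det := hS.det_pos
  have hfrac : (0:ℝ) < 1 + d / (ν - 2) := by
    have := div_nonneg (Nat.cast_nonneg d : (0:ℝ) ≤ d) (by linarith : (0:ℝ) ≤ ν - 2)
    linarith
  rw [Real.mul_rpow (by positivity) hfrac.le,
    Real.mul_rpow (by positivity) (by positivity),
    ← Real.rpow_mul hc.le, ← Real.rpow_mul hdetS.le]
  rw [show γ*(1/(1+γ)) = γ/(1+γ) by ring, show -γ/2*(1/(1+γ)) = -γ/(2*(1+γ)) by rw [div_mul_div_comm, mul_one]]
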